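/- (1/√2)·∏_{p ≡ 3 (mod 4)} (1 − p^{−2})^{−1/2} = (π/4)·∏_{p ≡ 1 (mod 4)} (1 − p^{−2})^{1/2}, the (convergent) products being over primes p; i.e., the two standard expressions for the Landau–Ramanujan constant B are equal. -/

import Mathlib

open Real

noncomputable def zfun : ℕ →*₀ ℝ where
  toFun n := 1 / (n : ℝ) ^ 2
  map_zero' := by norm_num
  map_one' := by norm_num
  map_mul' m n := by
    push_cast
    rw [mul_pow, one_div, one_div, one_div, mul_inv]

lemma zfun_summable : Summable fun n : ℕ => ‖zfun n‖ := by
  have : (fun n : ℕ => ‖zfun n‖) = fun n : ℕ => 1 / (n : ℝ) ^ 2 := by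
    funext n
    simp [zfun, Real.norm_eq_abs, abs_of_nonneg, div_nonneg]
  rw [this]
  exact hasSum_zeta_two.summable

lemma glog_pos {n : ℕ} (hn : n.Prime) : 0 < 1 - 1 / (n : ℝ) ^ 2 := by
  have h2 : (2 : ℝ) ≤ n := by exact_mod_cast hn.two_le
  have h4 : (4 : ℝ) ≤ (n : ℝ) ^ 2 := by nlinarith
  have : (1 : ℝ) / (n : ℝ) ^ 2 ≤ 1 / 4 := by
    apply one_div_le_one_div_of_le <;> linarith
  linarith

lemma neglog_le {n : ℕ} (h : 2 ≤ n) :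
    -Real.log (1 - 1 / (n : ℝ) ^ 2) ≤ 2 * (1 / (n : ℝ) ^ 2) := by
  have hn2 : (2 : ℝ) ≤ n := by exact_mod_cast h
  set x : ℝ := 1 / (n : ℝ) ^ 2 with hx
  have hx0 : 0 < x := by positivity
  have hx1 : x ≤ 1 / 4 := by
    rw [hx]; apply one_div_le_one_div_of_le <;> nlinarith
  have h1x : 0 < 1 - x := by linarith
  have hlog : Real.log (1 - x)⁻¹ ≤ (1 - x)⁻¹ - 1 :=
    Real.log_le_sub_one_of_pos (by positivity)
  rw [Real.log_inv] at hlog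
  have e : (1 - x)⁻¹ - 1 = x / (1 - x) := by field_simp; ring
  rw [e] at hlog
  have : x / (1 - x) ≤ 2 * x := by
    rw [div_le_iff₀ h1x]; nlinarith
  linarith

lemma neglog_nonneg {n : ℕ} (h : 2 ≤ n) :
    0 ≤ -Real.log (1 - 1 / (n : ℝ) ^ 2) := by
  have hn2 : (2 : ℝ) ≤ n := by exact_mod_cast h
  have hx0 : (0:ℝ) < 1 / (n : ℝ) ^ 2 := by positivity
  have hx1 : (1:ℝ) / (n : ℝ) ^ 2 ≤ 1 / 4 := by
    apply one_div_le_one_div_of_le <;> nlinarith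
  simp only [neg_nonneg]
  exact Real.log_nonpos (by linarith) (by linarith)

lemma hlog_summable : Summable fun n : ℕ => Real.log (1 - 1 / (n : ℝ) ^ 2) := by
  have H : Summable fun n : ℕ => -Real.log (1 - 1 / (n : ℝ) ^ 2) := by
    refine Summable.of_nonneg_of_le (fun n => ?_) (fun n => ?_)
      (hasSum_zeta_two.summable.mul_left 2)
    · rcases Nat.lt_or_ge n 2 with h | h
      · interval_cases n <;> norm_num
      · exact neglog_nonneg h
    · rcases Nat.lt_or_ge n 2 with h | h
      · interval_cases n <;> norm_num
      · exact neglog_le h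
  simpa using H.neg

set_option maxHeartbeats 2000000 in
theorem stmt17 :
    (1 / Real.sqrt 2) *
      ∏' p : {p : ℕ // p.Prime ∧ p % 4 = 3}, (1 - 1 / ((p : ℕ) : ℝ) ^ 2) ^ (-(1 / 2) : ℝ) =
    (Real.pi / 4) *
      ∏' p : {p : ℕ // p.Prime ∧ p % 4 = 1}, (1 - 1 / ((p : ℕ) : ℝ) ^ 2) ^ ((1 / 2 : ℝ)) := by
  classical
  set h : ℕ → ℝ := fun n => Real.log (1 - 1 / (n : ℝ) ^ 2) with hh
  have hsum : Summable h := hlog_summable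
  set Sp : Set ℕ := {n | n.Prime} with hSp
  set S1 : Set ℕ := {n | n.Prime ∧ n % 4 = 1} with hS1
  set S3 : Set ℕ := {n | n.Prime ∧ n % 4 = 3} with hS3
  -- set splitting
  have hset : Sp = ({2} ∪ S1) ∪ S3 := by
    ext n
    simp only [hSp, hS1, hS3, Set.mem_union, Set.mem_singleton_iff, Set.mem_setOf_eq]
    constructor
    · intro hn
      rcases hn.eq_two_or_odd' with h2 | hodd
      · exact Or.inl (Or.inl h2)
      · have : n % 2 = 1 := Nat.odd_iff.mp hodd
        have : n % 4 = 1 ∨ n % 4 = 3 := by omega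
        rcases this with h' | h'
        · exact Or.inl (Or.inr ⟨hn, h'⟩)
        · exact Or.inr ⟨hn, h'⟩
    · rintro ((rfl | ⟨hp, _⟩) | ⟨hp, _⟩)
      · exact Nat.prime_two
      · exact hp
      · exact hp
  have hd1 : Disjoint ({2} ∪ S1 : Set ℕ) S3 := by
    rw [Set.disjoint_left]
    rintro n (rfl | ⟨_, h1⟩) ⟨_, h3⟩
    · omega
    · omega
  have hd2 : Disjoint ({2} : Set ℕ) S1 := by
    rw [Set.disjoint_left]
    rintro n rfl ⟨_, h1⟩
    omega
  -- sums over pieces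
  set L1 : ℝ := ∑' p : S1, h p with hL1
  set L3 : ℝ := ∑' p : S3, h p with hL3
  have hsum1 : Summable (h ∘ (↑) : S1 → ℝ) := hsum.subtype S1
  have hsum3 : Summable (h ∘ (↑) : S3 → ℝ) := hsum.subtype S3
  have hsum2 : Summable (h ∘ (↑) : ({2} : Set ℕ) → ℝ) := hsum.subtype _
  have hsum21 : Summable (h ∘ (↑) : (({2} ∪ S1 : Set ℕ)) → ℝ) := hsum.subtype _
  have key : ∑' p : Sp, h p = h 2 + L1 + L3 := by
    rw [hset, Summable.tsum_union_disjoint hd1 hsum21 hsum3,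
      Summable.tsum_union_disjoint hd2 hsum2 hsum1, tsum_singleton]
  -- Euler product
  have H0 : HasProd (fun p : Nat.Primes => (1 - zfun p)⁻¹) (π ^ 2 / 6) := by
    have := EulerProduct.eulerProduct_completely_multiplicative_hasProd zfun_summable
    rwa [show (∑' n : ℕ, zfun n) = ∑' n : ℕ, 1 / (n : ℝ) ^ 2 from tsum_congr fun n => rfl,
      hasSum_zeta_two.tsum_eq] at this
  have H0' : HasProd (fun p : Sp => (1 - 1 / ((p : ℕ) : ℝ) ^ 2)⁻¹) (π ^ 2 / 6) := H0
  -- the product of g over all primes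
  have HP : HasProd (fun p : Sp => (1 - 1 / ((p : ℕ) : ℝ) ^ 2)) (Real.exp (h 2 + L1 + L3)) := by
    have := ((hsum.subtype Sp).hasSum).rexp
    simp only [Function.comp_def] at this
    rw [← key]
    refine this.congr_fun fun p => ?_
    simp only [Function.comp_apply, hh]
    exact (Real.exp_log (glog_pos p.2)).symm
  have hone : HasProd
      (fun p : Sp => (1 - 1 / ((p : ℕ) : ℝ) ^ 2) * (1 - 1 / ((p : ℕ) : ℝ) ^ 2)⁻¹) 1 := by
    have e : (fun p : Sp => (1 - 1 / ((p : ℕ) : ℝ) ^ 2) * (1 - 1 / ((p : ℕ) : ℝ) ^ 2)⁻¹)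
        = fun _ : Sp => (1 : ℝ) := by
      funext p
      exact mul_inv_cancel₀ (ne_of_gt (glog_pos p.2))
    rw [e]
    exact hasProd_one
  have hmul1 : Real.exp (h 2 + L1 + L3) * (π ^ 2 / 6) = 1 := (HP.mul H0').unique hone
  -- exp of h 2
  have he2 : Real.exp (h 2) = 3 / 4 := by
    have e : h 2 = Real.log (3 / 4) := by
      simp only [hh]
      norm_num
    rw [e, Real.exp_log]
    norm_num
  have hπ : (0 : ℝ) < π := Real.pi_pos
  have hB : Real.exp L1 * Real.exp L3 = 8 / π ^ 2 := by
    rw [Real.exp_add, Real.exp_add, he2] at hmul1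
    field_simp at hmul1 ⊢
    nlinarith [hmul1]
  -- rpow products
  have hP1 : HasProd (fun p : S1 => (1 - 1 / ((p : ℕ) : ℝ) ^ 2) ^ ((1 / 2 : ℝ)))
      (Real.exp (L1 * (1 / 2))) := by
    have := (hsum1.hasSum.mul_right (1 / 2)).rexp
    simp only [Function.comp_def] at this
    refine this.congr_fun fun p => ?_
    rw [Real.rpow_def_of_pos (glog_pos p.2.1)]
  have hP3 : HasProd (fun p : S3 => (1 - 1 / ((p : ℕ) : ℝ) ^ 2) ^ (-(1 / 2) : ℝ))
      (Real.exp (L3 * (-(1 / 2)))) := by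
    have := (hsum3.hasSum.mul_right (-(1 / 2))).rexp
    simp only [Function.comp_def] at this
    refine this.congr_fun fun p => ?_
    rw [Real.rpow_def_of_pos (glog_pos p.2.1)]
  have e1 : (∏' p : {p : ℕ // p.Prime ∧ p % 4 = 1}, (1 - 1 / ((p : ℕ) : ℝ) ^ 2) ^ ((1 / 2 : ℝ)))
      = Real.exp (L1 * (1 / 2)) := hP1.tprod_eq
  have e3 : (∏' p : {p : ℕ // p.Prime ∧ p % 4 = 3}, (1 - 1 / ((p : ℕ) : ℝ) ^ 2) ^ (-(1 / 2) : ℝ))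
      = Real.exp (L3 * (-(1 / 2))) := hP3.tprod_eq
  rw [e1, e3]
  set a : ℝ := Real.exp (L1 * (1 / 2)) with ha'
  set b : ℝ := Real.exp (L3 * (1 / 2)) with hb'
  have hea : 0 < a := Real.exp_pos _
  have heb : 0 < b := Real.exp_pos _
  have haa : a * a = Real.exp L1 := by
    rw [ha', ← Real.exp_add]; ring_nf
  have hbb : b * b = Real.exp L3 := by
    rw [hb', ← Real.exp_add]; ring_nf
  have hneg : Real.exp (L3 * (-(1 / 2))) = b⁻¹ := by
    rw [show L3 * (-(1 / 2)) = -(L3 * (1 / 2)) by ring, Real.exp_neg, hb']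
  rw [hneg]
  have hs2 : Real.sqrt 2 * Real.sqrt 2 = 2 := Real.mul_self_sqrt (by norm_num)
  have hs2p : 0 < Real.sqrt 2 := Real.sqrt_pos.mpr (by norm_num)
  have h8 : π ^ 2 * (a * a * (b * b)) = 8 := by
    rw [haa, hbb, hB]
    field_simp
  have hu : (Real.sqrt 2 * π * (a * b)) * (Real.sqrt 2 * π * (a * b)) = 16 := by
    have e : (Real.sqrt 2 * π * (a * b)) * (Real.sqrt 2 * π * (a * b))
        = (Real.sqrt 2 * Real.sqrt 2) * (π ^ 2 * (a * a * (b * b))) := by ring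
    rw [e, hs2, h8]; norm_num
  have hup : 0 < Real.sqrt 2 * π * (a * b) := by positivity
  have h4 : Real.sqrt 2 * π * (a * b) = 4 := by nlinarith [hu, hup]
  field_simp
  nlinarith [h4, hs2, hea, heb, hπ, hs2p]
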